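/- Mean hitting time tree formula: for a Markov chain X on finite S with w(R) > 0 and i ∈ S \ R, E_i[T_R] = ( Σ_{j ∈ S\R} w_{ij}(R ∪ {j}) ) / w(R). -/

import Mathlib

open Finset

/-- A spanning forest of `S` with root set `R`, encoded as a successor function:
roots are fixed points, and every state eventually reaches `R` under iteration. -/
def IsForest {S : Type*} [Fintype S] [DecidableEq S] (R : Finset S) (f : S → S) : Prop :=
  (∀ i ∈ R, f i = i) ∧ ∀ i : S, ∃ n : ℕ, f^[n] i ∈ R

/-- The `P`-weight of a forest: product of transition probabilities over its directed edges. -/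
noncomputable def forestWt {S : Type*} [Fintype S] [DecidableEq S]
    (p : S → S → ℝ) (R : Finset S) (f : S → S) : ℝ :=
  ∏ i ∈ Rᶜ, p i (f i)

open Classical in
/-- `w p R`: the total `P`-weight of spanning forests with root set `R`. -/
noncomputable def w {S : Type*} [Fintype S] [DecidableEq S]
    (p : S → S → ℝ) (R : Finset S) : ℝ :=
  ∑ f : S → S, if IsForest R f then forestWt p R f else 0

open Classical in
/-- `wroot p A i j`: total weight of forests with root set `A` in which the tree
containing `i` has root `j`. -/
noncomputable def wroot {S : Type*} [Fintype S] [DecidableEq S]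
    (p : S → S → ℝ) (A : Finset S) (i j : S) : ℝ :=
  ∑ f : S → S, if IsForest A f ∧ ∃ n : ℕ, f^[n] i = j then forestWt p A f else 0

/-- `p` is a stochastic matrix. -/
def IsStochastic {S : Type*} [Fintype S] (p : S → S → ℝ) : Prop :=
  (∀ i j, 0 ≤ p i j) ∧ ∀ i, ∑ j, p i j = 1

/-- `p` is irreducible. -/
def PIrreducible {S : Type*} [Fintype S] [DecidableEq S] (p : S → S → ℝ) : Prop :=
  ∀ i j : S, ∃ n : ℕ, 0 < ((Matrix.of p) ^ n) i j

/-- Weight of a path starting at `i` with successive states given by the list. -/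
def wt {S : Type*} (p : S → S → ℝ) : S → List S → ℝ
  | _, [] => 1
  | i, j :: l => p i j * wt p j l

/-- Mean hitting time of `R` starting from `i`, `E_i[T_R] = ∑_{n≥0} P_i(T_R > n)`, expressed
as the sum of weights of all finite paths from `i` staying outside `R`. -/
noncomputable def meanHit {S : Type*} [Fintype S] [DecidableEq S]
    (p : S → S → ℝ) (R : Finset S) (i : S) : ℝ :=
  ∑' l : {l : List S // ∀ x ∈ l, x ∉ R}, wt p i l.1

set_option linter.unusedSectionVars false

section Orbit
open Function
variable {S : Type*} [Fintype S] [DecidableEq S]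

lemma iterate_agree {f g : S → S} {a : S} (h : ∀ y, y ≠ a → g y = f y) :
    ∀ n (x : S), (∀ t, t < n → f^[t] x ≠ a) → g^[n] x = f^[n] x := by
  intro n
  induction n with
  | zero => intro x _; rfl
  | succ n ih =>
    intro x hx
    rw [iterate_succ_apply', iterate_succ_apply',
      ih x (fun t ht => hx t (ht.trans (Nat.lt_succ_self n)))]
    exact h _ (hx n (Nat.lt_succ_self n))

lemma eventually_const {f : S → S} {x : S} {n : ℕ}
    (hfix : f (f^[n] x) = f^[n] x) : ∀ m, n ≤ m → f^[m] x = f^[n] x := by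
  intro m hm
  have : m = (m - n) + n := by omega
  rw [this, Function.iterate_add_apply, Function.iterate_fixed hfix]

lemma forest_fix {R : Finset S} {f : S → S} (hf : IsForest R f) {a : S} (ha : a ∈ R) :
    f a = a := hf.1 a ha

/-- In a forest, no point outside the root set is periodic. -/
lemma no_return {A : Finset S} {F : S → S} (hF : IsForest A F) {i : S} (hi : i ∉ A) :
    ∀ n : ℕ, F^[n + 1] i ≠ i := by
  intro n h
  obtain ⟨m, hm⟩ := hF.2 i
  have hfix : F (F^[m] i) = F^[m] i := hF.1 _ hm
  have hper : ∀ M : ℕ, F^[(n + 1) * M] i = i := by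
    intro M
    induction M with
    | zero => rfl
    | succ M ih =>
      have : (n + 1) * (M + 1) = (n + 1) + (n + 1) * M := by ring
      rw [this, Function.iterate_add_apply, ih, h]
  have h1 : F^[(n + 1) * m] i = F^[m] i :=
    eventually_const hfix _ (Nat.le_mul_of_pos_left m (Nat.succ_pos n))
  rw [hper m] at h1
  rw [← h1] at hm
  exact hi hm

lemma no_return' {A : Finset S} {F : S → S} (hF : IsForest A F) {i : S} (hi : i ∉ A) :
    ∀ n : ℕ, F^[n] (F i) ≠ i := by
  intro n h
  exact no_return hF hi n (by rwa [Function.iterate_succ_apply])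

/-- If the orbit of `x` reaches an element of `R` (all fixed), `x ∈ R` if `x` is fixed... -/
lemma start_not_root {R : Finset S} {F : S → S} (hfixR : ∀ r ∈ R, F r = r)
    {x j : S} {n : ℕ} (hn : F^[n] x = j) (hj : j ∉ R) : x ∉ R := by
  intro hx
  have : F^[n] x = x := Function.iterate_fixed (hfixR x hx) n
  rw [hn] at this
  exact hj (this ▸ hx)

lemma forest_update_root {A : Finset S} {f : S → S} (hf : IsForest A f) (a : S) :
    IsForest (insert a A) (Function.update f a a) := by
  constructor
  · intro x hx
    rcases eq_or_ne x a with rfl | hxa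
    · simp
    · rw [Function.update_of_ne hxa]
      exact hf.1 x (by simpa [hxa] using hx)
  · intro x
    obtain ⟨n, hn⟩ := hf.2 x
    have hex : ∃ t, f^[t] x ∈ insert a A := ⟨n, mem_insert_of_mem hn⟩
    set T := Nat.find hex with hT
    refine ⟨T, ?_⟩
    have hagree : (Function.update f a a)^[T] x = f^[T] x := by
      refine iterate_agree (fun y hy => Function.update_of_ne hy a f) T x ?_
      intro t ht hta
      exact Nat.find_min hex ht (by rw [hta]; exact mem_insert_self a A)
    rw [hagree]
    exact Nat.find_spec hex

/-- Rewiring the edge at `i ∉ A` towards a point `k` whose orbit avoids `i`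
keeps the forest property. -/
lemma forest_rewire {A : Finset S} {F : S → S} (hF : IsForest A F) {i k : S} (hi : i ∉ A)
    (hk : ∀ n, F^[n] k ≠ i) : IsForest A (Function.update F i k) := by
  set G := Function.update F i k with hG
  have hag : ∀ y, y ≠ i → G y = F y := fun y hy => Function.update_of_ne hy k F
  have hkG : ∀ n, G^[n] k = F^[n] k := by
    intro n; exact iterate_agree hag n k (fun t _ => hk t)
  constructor
  · intro x hx
    rw [hag x (fun h => hi (h ▸ hx))]
    exact hF.1 x hx
  · intro x
    obtain ⟨n, hn⟩ := hF.2 x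
    have hex : ∃ t, (F^[t] x = i ∨ F^[t] x ∈ A) := ⟨n, Or.inr hn⟩
    set T := Nat.find hex with hT
    have hAgree : G^[T] x = F^[T] x := by
      refine iterate_agree hag T x ?_
      intro t ht hta
      exact Nat.find_min hex ht (Or.inl hta)
    rcases Nat.find_spec hex with hcase | hcase
    · -- orbit reaches i; go through k
      obtain ⟨m, hm⟩ := hF.2 k
      refine ⟨m + (1 + T), ?_⟩
      rw [Function.iterate_add_apply]
      have h1 : G^[1 + T] x = k := by
        rw [Function.iterate_add_apply, hAgree, hcase]
        simp [hG]
      rw [h1, hkG]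
      exact hm
    · exact ⟨T, by rw [hAgree]; exact hcase⟩

/-- Key predicate equivalence: `f'` is a forest rooted at `R` iff re-rooting at `j`
gives a forest rooted at `insert j R` in which the (removed) edge target `f' j`
does not lead back to `j`. -/
lemma isForest_iff_update {R : Finset S} {j : S} (hj : j ∉ R) (f' : S → S) :
    IsForest R f' ↔ (IsForest (insert j R) (Function.update f' j j) ∧
      ¬ ∃ n : ℕ, (Function.update f' j j)^[n] (f' j) = j) := by
  set F := Function.update f' j j with hF
  have hag : ∀ y, y ≠ j → F y = f' y := fun y hy => Function.update_of_ne hy j f'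
  have hag' : ∀ y, y ≠ j → f' y = F y := fun y hy => (hag y hy).symm
  constructor
  · intro hf'
    refine ⟨forest_update_root hf' j, ?_⟩
    rintro ⟨n, hn⟩
    have hex : ∃ t, F^[t] (f' j) = j := ⟨n, hn⟩
    set N := Nat.find hex with hN
    have hagree : f'^[N] (f' j) = F^[N] (f' j) := by
      refine (iterate_agree hag' N (f' j) ?_)
      intro t ht hta
      exact Nat.find_min hex ht hta
    have : f'^[N + 1] j = j := by
      rw [Function.iterate_succ_apply, hagree, Nat.find_spec hex]
    exact no_return hf' hj N this
  · rintro ⟨hForest, hnr⟩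
    have hfixR : ∀ r ∈ R, f' r = r := by
      intro r hr
      rw [hag' r (fun h => hj (h ▸ hr))]
      exact hForest.1 r (mem_insert_of_mem hr)
    -- the orbit of b := f' j reaches R under f'
    have hb : ∃ m, f'^[m] (f' j) ∈ R := by
      obtain ⟨m, hm⟩ := hForest.2 (f' j)
      have hex : ∃ t, F^[t] (f' j) ∈ insert j R := ⟨m, hm⟩
      set N := Nat.find hex with hN
      have hnotj : F^[N] (f' j) ≠ j := fun h => hnr ⟨N, h⟩
      have hagree : f'^[N] (f' j) = F^[N] (f' j) := by
        refine iterate_agree hag' N (f' j) ?_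
        intro t ht hta
        exact Nat.find_min hex ht (by rw [hta]; exact mem_insert_self j R)
      refine ⟨N, ?_⟩
      rw [hagree]
      have := Nat.find_spec hex
      rcases mem_insert.mp this with h | h
      · exact absurd h hnotj
      · exact h
    constructor
    · exact hfixR
    · intro x
      obtain ⟨n, hn⟩ := hForest.2 x
      have hex : ∃ t, F^[t] x ∈ insert j R := ⟨n, hn⟩
      set T := Nat.find hex with hT
      have hagree : f'^[T] x = F^[T] x := by
        refine iterate_agree hag' T x ?_
        intro t ht hta
        exact Nat.find_min hex ht (by rw [hta]; exact mem_insert_self j R)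
      rcases mem_insert.mp (Nat.find_spec hex) with h | h
      · -- reaches j, then continue through f' j into R
        obtain ⟨m, hm⟩ := hb
        refine ⟨(m + 1) + T, ?_⟩
        rw [Function.iterate_add_apply, hagree, h, Function.iterate_succ_apply]
        exact hm
      · exact ⟨T, by rw [hagree]; exact h⟩

end Orbit
section Comb
open Function Classical
variable {S : Type*} [Fintype S] [DecidableEq S]

lemma ite_sum' {c : Prop} [Decidable c] {ι : Type*} {s : Finset ι} (B : ι → ℝ) :
    (if c then (∑ t ∈ s, B t) else 0) = ∑ t ∈ s, (if c then B t else 0) := by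
  split_ifs <;> simp

lemma forestWt_update (p : S → S → ℝ) {R : Finset S} {j : S} (hj : j ∉ R) (f' : S → S) :
    forestWt p R f' = p j (f' j) * forestWt p (insert j R) (Function.update f' j j) := by
  unfold forestWt
  rw [← Finset.mul_prod_erase Rᶜ _ (Finset.mem_compl.mpr hj), Finset.compl_insert]
  congr 1
  refine Finset.prod_congr rfl (fun m hm => ?_)
  rw [Function.update_of_ne (Finset.ne_of_mem_erase hm)]

open Classical in
lemma root_expand (p : S → S → ℝ) {R : Finset S} {j : S}
    (hs2 : ∀ a, ∑ b, p a b = 1) (hj : j ∉ R) (x : S) :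
    wroot p (insert j R) x j =
      ∑ f' : S → S, if (IsForest (insert j R) (Function.update f' j j) ∧
          ∃ n : ℕ, (Function.update f' j j)^[n] x = j) then forestWt p R f' else 0 := by
  classical
  unfold wroot
  have h1 : ∀ f : S → S,
      (if IsForest (insert j R) f ∧ ∃ n : ℕ, f^[n] x = j then forestWt p (insert j R) f else 0)
      = ∑ t : S, (if IsForest (insert j R) f ∧ ∃ n : ℕ, f^[n] x = j
          then p j t * forestWt p (insert j R) f else 0) := by
    intro f
    rw [← ite_sum']
    congr 1
    rw [← Finset.sum_mul, hs2 j, one_mul]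
  rw [Finset.sum_congr rfl (fun f _ => h1 f)]
  rw [← Fintype.sum_prod_type']
  -- now reindex pairs (f, t) with f' = update f j t
  have lhs_filter : ∑ q : (S → S) × S,
      (if IsForest (insert j R) q.1 ∧ ∃ n : ℕ, q.1^[n] x = j
        then p j q.2 * forestWt p (insert j R) q.1 else 0)
      = ∑ q ∈ Finset.univ.filter
          (fun q : (S → S) × S => IsForest (insert j R) q.1 ∧ ∃ n : ℕ, q.1^[n] x = j),
          p j q.2 * forestWt p (insert j R) q.1 := (Finset.sum_filter _ _).symm
  have rhs_filter : ∑ f' : S → S, (if (IsForest (insert j R) (Function.update f' j j) ∧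
          ∃ n : ℕ, (Function.update f' j j)^[n] x = j) then forestWt p R f' else 0)
      = ∑ f' ∈ Finset.univ.filter (fun f' : S → S =>
          IsForest (insert j R) (Function.update f' j j) ∧
          ∃ n : ℕ, (Function.update f' j j)^[n] x = j), forestWt p R f' :=
    (Finset.sum_filter _ _).symm
  rw [lhs_filter, rhs_filter]
  refine Finset.sum_nbij' (fun q => Function.update q.1 j q.2)
    (fun f' => (Function.update f' j j, f' j)) ?_ ?_ ?_ ?_ ?_
  · intro q hq
    simp only [Finset.mem_filter, Finset.mem_univ, true_and] at hq ⊢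
    have hfix : q.1 j = j := hq.1.1 j (Finset.mem_insert_self j R)
    have : Function.update (Function.update q.1 j q.2) j j = q.1 := by
      rw [Function.update_idem]
      exact Function.update_eq_self_iff.mpr hfix.symm
    rw [this]
    exact hq
  · intro f' hf'
    simp only [Finset.mem_filter, Finset.mem_univ, true_and] at hf' ⊢
    exact hf'
  · intro q hq
    simp only [Finset.mem_filter, Finset.mem_univ, true_and] at hq
    have hfix : q.1 j = j := hq.1.1 j (Finset.mem_insert_self j R)
    have h2 : Function.update (Function.update q.1 j q.2) j j = q.1 := by
      rw [Function.update_idem]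
      exact Function.update_eq_self_iff.mpr hfix.symm
    rw [h2, Function.update_self]
  · intro f' _
    dsimp only
    rw [Function.update_idem]
    exact Function.update_eq_self j f'
  · intro q hq
    simp only [Finset.mem_filter, Finset.mem_univ, true_and] at hq
    have hfix : q.1 j = j := hq.1.1 j (Finset.mem_insert_self j R)
    have h2 : Function.update (Function.update q.1 j q.2) j j = q.1 := by
      rw [Function.update_idem]
      exact Function.update_eq_self_iff.mpr hfix.symm
    rw [forestWt_update p hj (Function.update q.1 j q.2), Function.update_self, h2]

end Comb
section Comb2
open Function Classical
variable {S : Type*} [Fintype S] [DecidableEq S]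

lemma ite_ite {c d : Prop} [Decidable c] [Decidable d] (v : ℝ) :
    (if c then (if d then v else 0) else 0) = if c ∧ d then v else 0 := by
  split_ifs with h1 h2 h3 <;> first | rfl | (exfalso; tauto)

open Classical in
lemma key_Ej (p : S → S → ℝ) {R : Finset S} {j : S} (hs2 : ∀ a, ∑ b, p a b = 1) (hj : j ∉ R) :
    wroot p (insert j R) j j = w p R + ∑ k ∈ Rᶜ, p j k * wroot p (insert j R) k j := by
  classical
  have step1 : wroot p (insert j R) j j
      = ∑ f' : S → S, if IsForest (insert j R) (Function.update f' j j)
          then forestWt p R f' else 0 := by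
    rw [root_expand p hs2 hj j]
    refine Finset.sum_congr rfl (fun f' _ => ?_)
    refine if_congr ?_ rfl rfl
    exact and_iff_left ⟨0, rfl⟩
  have step2 : ∑ k ∈ Rᶜ, p j k * wroot p (insert j R) k j
      = ∑ f' : S → S, if (IsForest (insert j R) (Function.update f' j j) ∧
          ∃ n : ℕ, (Function.update f' j j)^[n] (f' j) = j) then forestWt p R f' else 0 := by
    unfold wroot
    have h1 : ∀ k, p j k * (∑ f : S → S, if IsForest (insert j R) f ∧ ∃ n : ℕ, f^[n] k = j
          then forestWt p (insert j R) f else 0)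
        = ∑ f : S → S, if IsForest (insert j R) f ∧ ∃ n : ℕ, f^[n] k = j
          then p j k * forestWt p (insert j R) f else 0 := by
      intro k
      rw [Finset.mul_sum]
      exact Finset.sum_congr rfl (fun f _ => by rw [mul_ite, mul_zero])
    rw [Finset.sum_congr rfl (fun k _ => h1 k), ← Finset.sum_product']
    rw [Finset.sum_filter (s := Rᶜ ×ˢ Finset.univ)
      (p := fun q : S × (S → S) => IsForest (insert j R) q.2 ∧ ∃ n : ℕ, q.2^[n] q.1 = j)
      (f := fun q => p j q.1 * forestWt p (insert j R) q.2) |>.symm]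
    rw [show (∑ f' : S → S, if (IsForest (insert j R) (Function.update f' j j) ∧
          ∃ n : ℕ, (Function.update f' j j)^[n] (f' j) = j) then forestWt p R f' else 0)
        = ∑ f' ∈ Finset.univ.filter (fun f' : S → S =>
            IsForest (insert j R) (Function.update f' j j) ∧
            ∃ n : ℕ, (Function.update f' j j)^[n] (f' j) = j), forestWt p R f'
      from (Finset.sum_filter _ _).symm]
    refine Finset.sum_nbij' (fun q => Function.update q.2 j q.1)
      (fun f' => (f' j, Function.update f' j j)) ?_ ?_ ?_ ?_ ?_
    · rintro ⟨k, f⟩ hq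
      simp only [Finset.mem_filter, Finset.mem_product, Finset.mem_univ, and_true] at hq ⊢
      obtain ⟨-, hfor, n, hn⟩ := hq
      have hfix : f j = j := hfor.1 j (Finset.mem_insert_self j R)
      have h2 : Function.update (Function.update f j k) j j = f := by
        rw [Function.update_idem]
        exact Function.update_eq_self_iff.mpr hfix.symm
      rw [h2]
      simp only [Function.update_self, true_and]
      exact ⟨hfor, n, hn⟩
    · intro f' hf'
      simp only [Finset.mem_filter, Finset.mem_univ, true_and, and_true,
        Finset.mem_product] at hf' ⊢
      obtain ⟨hfor, n, hn⟩ := hf'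
      have hfixR : ∀ r ∈ R, (Function.update f' j j) r = r :=
        fun r hr => hfor.1 r (Finset.mem_insert_of_mem hr)
      refine ⟨Finset.mem_compl.mpr (start_not_root hfixR hn hj), hfor, n, hn⟩
    · rintro ⟨k, f⟩ hq
      simp only [Finset.mem_filter, Finset.mem_product, Finset.mem_univ, and_true] at hq
      obtain ⟨-, hfor, -⟩ := hq
      have hfix : f j = j := hfor.1 j (Finset.mem_insert_self j R)
      have h2 : Function.update (Function.update f j k) j j = f := by
        rw [Function.update_idem]
        exact Function.update_eq_self_iff.mpr hfix.symm
      dsimp only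
      rw [h2, Function.update_self]
    · intro f' _
      dsimp only
      rw [Function.update_idem]
      exact Function.update_eq_self j f'
    · rintro ⟨k, f⟩ hq
      simp only [Finset.mem_filter, Finset.mem_product, Finset.mem_univ, and_true] at hq
      obtain ⟨-, hfor, -⟩ := hq
      have hfix : f j = j := hfor.1 j (Finset.mem_insert_self j R)
      have h2 : Function.update (Function.update f j k) j j = f := by
        rw [Function.update_idem]
        exact Function.update_eq_self_iff.mpr hfix.symm
      dsimp only
      rw [forestWt_update p hj (Function.update f j k), Function.update_self, h2]
  rw [step1, step2]
  have wdef : w p R = ∑ f' : S → S, if IsForest R f' then forestWt p R f' else 0 := rfl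
  rw [wdef, ← Finset.sum_add_distrib]
  refine Finset.sum_congr rfl (fun f' _ => ?_)
  have hiff := isForest_iff_update hj f'
  by_cases hfor : IsForest (insert j R) (Function.update f' j j)
  · by_cases hre : ∃ n : ℕ, (Function.update f' j j)^[n] (f' j) = j
    · have : ¬ IsForest R f' := fun h => (hiff.mp h).2 hre
      rw [if_pos hfor, if_neg this, if_pos ⟨hfor, hre⟩, zero_add]
    · have : IsForest R f' := hiff.mpr ⟨hfor, hre⟩
      rw [if_pos hfor, if_pos this, if_neg (fun h => hre h.2), add_zero]
  · have h1 : ¬ IsForest R f' := fun h => hfor (hiff.mp h).1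
    rw [if_neg hfor, if_neg h1, if_neg (fun h => hfor h.1), add_zero]

end Comb2
section Comb3
open Function Classical
variable {S : Type*} [Fintype S] [DecidableEq S]

open Classical in
noncomputable def swapMap (i j : S) : S × (S → S) → S × (S → S) :=
  fun q => if ∃ n : ℕ, (Function.update q.2 j j)^[n] q.1 = i then q
    else (q.2 i, Function.update q.2 i q.1)

open Classical in
lemma swapMap_pos {i j k : S} {f' : S → S}
    (h : ∃ n : ℕ, (Function.update f' j j)^[n] k = i) : swapMap i j (k, f') = (k, f') := by
  rw [swapMap]
  exact if_pos h

open Classical in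
lemma swapMap_neg {i j k : S} {f' : S → S}
    (h : ¬ ∃ n : ℕ, (Function.update f' j j)^[n] k = i) :
    swapMap i j (k, f') = (f' i, Function.update f' i k) := by
  rw [swapMap]
  exact if_neg h

open Classical in
lemma key_Ene (p : S → S → ℝ) {R : Finset S} {i j : S} (hs2 : ∀ a, ∑ b, p a b = 1)
    (hi : i ∉ R) (hj : j ∉ R) (hij : i ≠ j) :
    wroot p (insert j R) i j = ∑ k ∈ Rᶜ, p i k * wroot p (insert j R) k j := by
  classical
  have hiA : i ∉ insert j R := by simp [hij, hi]
  have hjA : j ∈ insert j R := Finset.mem_insert_self j R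
  -- LHS expansion
  have lhs_eq : wroot p (insert j R) i j
      = ∑ q : S × (S → S), if (IsForest (insert j R) (Function.update q.2 j j) ∧
          ∃ n : ℕ, (Function.update q.2 j j)^[n] i = j)
          then p i q.1 * forestWt p R q.2 else 0 := by
    rw [root_expand p hs2 hj i]
    have e1 := Fintype.sum_prod_type' (f := fun (k : S) (f' : S → S) =>
      if (IsForest (insert j R) (Function.update f' j j) ∧
          ∃ n : ℕ, (Function.update f' j j)^[n] i = j)
          then p i k * forestWt p R f' else 0)
    rw [e1]
    rw [Finset.sum_comm (s := Finset.univ) (t := Finset.univ) (f := fun (k : S) (f' : S → S) =>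
      if (IsForest (insert j R) (Function.update f' j j) ∧
          ∃ n : ℕ, (Function.update f' j j)^[n] i = j)
          then p i k * forestWt p R f' else 0)]
    refine Finset.sum_congr rfl (fun f' _ => ?_)
    rw [← ite_sum']
    congr 1
    rw [← Finset.sum_mul, hs2 i, one_mul]
  -- RHS expansion
  have rhs_eq : ∑ k ∈ Rᶜ, p i k * wroot p (insert j R) k j
      = ∑ q : S × (S → S), if (q.1 ∈ Rᶜ ∧ IsForest (insert j R) (Function.update q.2 j j) ∧
          ∃ n : ℕ, (Function.update q.2 j j)^[n] q.1 = j)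
          then p i q.1 * forestWt p R q.2 else 0 := by
    have h1 : ∀ k, p i k * wroot p (insert j R) k j
        = ∑ f' : S → S, if (IsForest (insert j R) (Function.update f' j j) ∧
            ∃ n : ℕ, (Function.update f' j j)^[n] k = j)
            then p i k * forestWt p R f' else 0 := by
      intro k
      rw [root_expand p hs2 hj k, Finset.mul_sum]
      exact Finset.sum_congr rfl (fun f' _ => by rw [mul_ite, mul_zero])
    rw [Finset.sum_congr rfl (fun k _ => h1 k)]
    rw [← Fintype.sum_ite_mem Rᶜ]
    have e2 := Fintype.sum_prod_type' (f := fun (k : S) (f' : S → S) =>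
      if (k ∈ Rᶜ ∧ IsForest (insert j R) (Function.update f' j j) ∧
          ∃ n : ℕ, (Function.update f' j j)^[n] k = j)
          then p i k * forestWt p R f' else 0)
    rw [e2]
    refine Finset.sum_congr rfl (fun k _ => ?_)
    rw [ite_sum']
    exact Finset.sum_congr rfl (fun f' _ => ite_ite _)
  rw [lhs_eq, rhs_eq]
  rw [Finset.sum_filter (s := (Finset.univ : Finset (S × (S → S))))
    (p := fun q : S × (S → S) => IsForest (insert j R) (Function.update q.2 j j) ∧
        ∃ n : ℕ, (Function.update q.2 j j)^[n] i = j)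
    (f := fun q => p i q.1 * forestWt p R q.2) |>.symm]
  rw [Finset.sum_filter (s := (Finset.univ : Finset (S × (S → S))))
    (p := fun q : S × (S → S) => q.1 ∈ Rᶜ ∧ IsForest (insert j R) (Function.update q.2 j j) ∧
        ∃ n : ℕ, (Function.update q.2 j j)^[n] q.1 = j)
    (f := fun q => p i q.1 * forestWt p R q.2) |>.symm]
  refine Finset.sum_nbij' (swapMap i j) (swapMap i j) ?_ ?_ ?_ ?_ ?_
  -- (1) maps X into Y
  · rintro ⟨k, f'⟩ hq
    simp only [Finset.mem_filter, Finset.mem_univ, true_and] at hq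
    obtain ⟨hΦ, m, hm⟩ := hq
    set F := Function.update f' j j with hF
    have hfixR : ∀ r ∈ R, F r = r := fun r hr => hΦ.1 r (Finset.mem_insert_of_mem hr)
    by_cases hb : ∃ n : ℕ, F^[n] k = i
    · rw [swapMap_pos hb]
      simp only [Finset.mem_filter, Finset.mem_univ, true_and]
      obtain ⟨n, hn⟩ := hb
      refine ⟨Finset.mem_compl.mpr (start_not_root hfixR hn hi), hΦ, ⟨m + n, ?_⟩⟩
      rw [Function.iterate_add_apply, hn, hm]
    · rw [swapMap_neg hb]
      simp only [Finset.mem_filter, Finset.mem_univ, true_and]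
      push_neg at hb
      have hFi : F i = f' i := Function.update_of_ne hij j f'
      have hm' : ∃ m', F^[m'] (F i) = j := by
        rcases m with - | m'
        · exact absurd hm hij
        · exact ⟨m', by rwa [Function.iterate_succ_apply] at hm⟩
      obtain ⟨m', hm'⟩ := hm'
      have hF2 : Function.update (Function.update f' i k) j j
          = Function.update F i k := Function.update_comm hij k j f'
      have hnoret : ∀ t, F^[t] (F i) ≠ i := no_return' hΦ hiA
      have hagree : ∀ t, (Function.update F i k)^[t] (F i) = F^[t] (F i) := by
        intro t
        exact iterate_agree (fun y hy => Function.update_of_ne hy k F) t (F i)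
          (fun t' _ => hnoret t')
      rw [hF2]
      refine ⟨?_, forest_rewire hΦ hiA hb, ⟨m', ?_⟩⟩
      · refine Finset.mem_compl.mpr ?_
        have h3 := start_not_root hfixR hm' hj
        rw [hFi] at h3
        exact h3
      · rw [← hFi, hagree m', hm']
  -- (2) maps Y into X
  · rintro ⟨k, f'⟩ hq
    simp only [Finset.mem_filter, Finset.mem_univ, true_and] at hq
    obtain ⟨hkR, hΦ, m, hm⟩ := hq
    set F := Function.update f' j j with hF
    have hFj : F j = j := hΦ.1 j hjA
    by_cases hb : ∃ n : ℕ, F^[n] k = i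
    · rw [swapMap_pos hb]
      simp only [Finset.mem_filter, Finset.mem_univ, true_and]
      obtain ⟨n, hn⟩ := hb
      refine ⟨hΦ, ?_⟩
      rcases le_or_gt m n with hle | hlt
      · exfalso
        have h4 : F^[n] k = j := by
          have h5 : F^[(n - m) + m] k = j := by
            rw [Function.iterate_add_apply, hm, Function.iterate_fixed hFj]
          rwa [show n - m + m = n by omega] at h5
        rw [hn] at h4
        exact hij h4
      · refine ⟨m - n, ?_⟩
        have h5 : F^[(m - n) + n] k = j := by rwa [show m - n + n = m by omega]
        rwa [Function.iterate_add_apply, hn] at h5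
    · rw [swapMap_neg hb]
      simp only [Finset.mem_filter, Finset.mem_univ, true_and]
      push_neg at hb
      have hF2 : Function.update (Function.update f' i k) j j
          = Function.update F i k := Function.update_comm hij k j f'
      have hagree : ∀ t, (Function.update F i k)^[t] k = F^[t] k := by
        intro t
        exact iterate_agree (fun y hy => Function.update_of_ne hy k F) t k
          (fun t' _ => hb t')
      rw [hF2]
      refine ⟨forest_rewire hΦ hiA hb, ⟨m + 1, ?_⟩⟩
      rw [Function.iterate_succ_apply, Function.update_self, hagree m, hm]
  -- (3) left inverse on X
  · rintro ⟨k, f'⟩ hq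
    simp only [Finset.mem_filter, Finset.mem_univ, true_and] at hq
    obtain ⟨hΦ, -⟩ := hq
    set F := Function.update f' j j with hF
    by_cases hb : ∃ n : ℕ, F^[n] k = i
    · rw [swapMap_pos hb, swapMap_pos hb]
    · rw [swapMap_neg hb]
      push_neg at hb
      have hF2 : Function.update (Function.update f' i k) j j
          = Function.update F i k := Function.update_comm hij k j f'
      have hnoret : ∀ t, F^[t] (F i) ≠ i := no_return' hΦ hiA
      have hFi : F i = f' i := Function.update_of_ne hij j f'
      have hagree : ∀ t, (Function.update F i k)^[t] (F i) = F^[t] (F i) := by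
        intro t
        exact iterate_agree (fun y hy => Function.update_of_ne hy k F) t (F i)
          (fun t' _ => hnoret t')
      have hb2 : ¬ ∃ n : ℕ, (Function.update (Function.update f' i k) j j)^[n] (f' i) = i := by
        rw [hF2]
        rintro ⟨n, hn⟩
        rw [← hFi, hagree n] at hn
        exact hnoret n hn
      rw [swapMap_neg hb2, Function.update_self, Function.update_idem,
        Function.update_eq_self i f']
  -- (4) right inverse on Y
  · rintro ⟨k, f'⟩ hq
    simp only [Finset.mem_filter, Finset.mem_univ, true_and] at hq
    obtain ⟨-, hΦ, -⟩ := hq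
    set F := Function.update f' j j with hF
    by_cases hb : ∃ n : ℕ, F^[n] k = i
    · rw [swapMap_pos hb, swapMap_pos hb]
    · rw [swapMap_neg hb]
      push_neg at hb
      have hF2 : Function.update (Function.update f' i k) j j
          = Function.update F i k := Function.update_comm hij k j f'
      have hnoret : ∀ t, F^[t] (F i) ≠ i := no_return' hΦ hiA
      have hFi : F i = f' i := Function.update_of_ne hij j f'
      have hagree : ∀ t, (Function.update F i k)^[t] (F i) = F^[t] (F i) := by
        intro t
        exact iterate_agree (fun y hy => Function.update_of_ne hy k F) t (F i)
          (fun t' _ => hnoret t')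
      have hb2 : ¬ ∃ n : ℕ, (Function.update (Function.update f' i k) j j)^[n] (f' i) = i := by
        rw [hF2]
        rintro ⟨n, hn⟩
        rw [← hFi, hagree n] at hn
        exact hnoret n hn
      rw [swapMap_neg hb2, Function.update_self, Function.update_idem,
        Function.update_eq_self i f']
  -- (5) weights agree
  · rintro ⟨k, f'⟩ hq
    simp only [Finset.mem_filter, Finset.mem_univ, true_and] at hq
    set F := Function.update f' j j with hF
    by_cases hb : ∃ n : ℕ, F^[n] k = i
    · rw [swapMap_pos hb]
    · rw [swapMap_neg hb]
      dsimp only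
      have hiRc : i ∈ Rᶜ := Finset.mem_compl.mpr hi
      unfold forestWt
      rw [← Finset.mul_prod_erase Rᶜ (fun m => p m (f' m)) hiRc,
        ← Finset.mul_prod_erase Rᶜ (fun m => p m ((Function.update f' i k) m)) hiRc]
      rw [Function.update_self]
      have h6 : ∀ m ∈ Rᶜ.erase i, p m ((Function.update f' i k) m) = p m (f' m) := by
        intro m hm
        rw [Function.update_of_ne (Finset.ne_of_mem_erase hm)]
      rw [Finset.prod_congr rfl h6]
      ring

end Comb3
section Ana
open Function Classical Finset
variable {S : Type*} [Fintype S] [DecidableEq S]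

open Classical in
lemma wroot_fixed (p : S → S → ℝ) {A : Finset S} {x j : S} (hx : x ∈ A) (hxj : x ≠ j) :
    wroot p A x j = 0 := by
  unfold wroot
  refine Finset.sum_eq_zero fun f _ => ?_
  rw [if_neg]
  rintro ⟨hf, n, hn⟩
  have h1 : f^[n] x = x := Function.iterate_fixed (hf.1 x hx) n
  rw [h1] at hn
  exact hxj hn

open Classical in
lemma g_recursion (p : S → S → ℝ) {R : Finset S} (hs2 : ∀ a, ∑ b, p a b = 1)
    {i : S} (hi : i ∉ R) :
    ∑ j ∈ Rᶜ, wroot p (insert j R) i j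
      = w p R + ∑ k ∈ Rᶜ, p i k * (∑ j ∈ Rᶜ, wroot p (insert j R) k j) := by
  classical
  have key : ∀ j ∈ Rᶜ, wroot p (insert j R) i j
      = (if i = j then w p R else 0) + ∑ k ∈ Rᶜ, p i k * wroot p (insert j R) k j := by
    intro j hjc
    have hj := Finset.mem_compl.mp hjc
    by_cases h : i = j
    · subst h
      rw [if_pos rfl]
      exact key_Ej p hs2 hj
    · rw [if_neg h, zero_add]
      exact key_Ene p hs2 hi hj h
  rw [Finset.sum_congr rfl key, Finset.sum_add_distrib]
  congr 1
  · rw [Finset.sum_ite_eq Rᶜ i (fun _ => w p R), if_pos (Finset.mem_compl.mpr hi)]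
  · rw [Finset.sum_comm]
    exact Finset.sum_congr rfl (fun k _ => (Finset.mul_sum _ _ _).symm)

noncomputable def vfn (p : S → S → ℝ) (R : Finset S) : ℕ → S → ℝ
  | 0, _ => 1
  | (n+1), x => ∑ k ∈ Rᶜ, p x k * vfn p R n k

variable {p : S → S → ℝ} {R : Finset S}

lemma vfn_nonneg (hp1 : ∀ a b, 0 ≤ p a b) : ∀ n x, 0 ≤ vfn p R n x := by
  intro n
  induction n with
  | zero => intro x; simp [vfn]
  | succ n ih =>
    intro x
    simp only [vfn]
    exact Finset.sum_nonneg fun k _ => mul_nonneg (hp1 x k) (ih k)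

lemma sum_compl_le (hp1 : ∀ a b, 0 ≤ p a b) (hs2 : ∀ a, ∑ b, p a b = 1) (x : S) :
    ∑ k ∈ Rᶜ, p x k ≤ 1 := by
  rw [← hs2 x]
  exact Finset.sum_le_sum_of_subset_of_nonneg (Finset.subset_univ _)
    (fun k _ _ => hp1 x k)

lemma vfn_le_one (hp1 : ∀ a b, 0 ≤ p a b) (hs2 : ∀ a, ∑ b, p a b = 1) :
    ∀ n x, vfn p R n x ≤ 1 := by
  intro n
  induction n with
  | zero => intro x; simp [vfn]
  | succ n ih =>
    intro x
    simp only [vfn]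
    calc ∑ k ∈ Rᶜ, p x k * vfn p R n k ≤ ∑ k ∈ Rᶜ, p x k := by
          refine Finset.sum_le_sum fun k _ => ?_
          calc p x k * vfn p R n k ≤ p x k * 1 :=
                mul_le_mul_of_nonneg_left (ih k) (hp1 x k)
            _ = p x k := mul_one _
      _ ≤ 1 := sum_compl_le hp1 hs2 x

lemma vfn_succ_le (hp1 : ∀ a b, 0 ≤ p a b) (hs2 : ∀ a, ∑ b, p a b = 1) :
    ∀ n x, vfn p R (n + 1) x ≤ vfn p R n x := by
  intro n
  induction n with
  | zero => intro x; simpa [vfn] using sum_compl_le hp1 hs2 x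
  | succ n ih =>
    intro x
    simp only [vfn]
    exact Finset.sum_le_sum fun k _ => mul_le_mul_of_nonneg_left (ih k) (hp1 x k)

lemma vfn_mono (hp1 : ∀ a b, 0 ≤ p a b) (hs2 : ∀ a, ∑ b, p a b = 1) {m n : ℕ}
    (h : m ≤ n) (x : S) : vfn p R n x ≤ vfn p R m x := by
  induction n with
  | zero => rw [Nat.le_zero.mp h]
  | succ n ih =>
    rcases Nat.lt_or_ge m (n+1) with h1 | h1
    · exact le_trans (vfn_succ_le hp1 hs2 n x) (ih (by omega))
    · rw [show m = n + 1 by omega]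

lemma vfn_decay (hp1 : ∀ a b, 0 ≤ p a b) (hs2 : ∀ a, ∑ b, p a b = 1)
    {f₀ : S → S} {ε : ℝ} (hε0 : 0 < ε) (hε1 : ε ≤ 1)
    (hεle : ∀ x, x ∉ R → ε ≤ p x (f₀ x)) :
    ∀ m, ∀ x, x ∉ R → (∃ n, n ≤ m ∧ f₀^[n] x ∈ R) → vfn p R m x ≤ 1 - ε ^ m := by
  intro m
  induction m with
  | zero =>
    rintro x hx ⟨n, hn, hmem⟩
    interval_cases n
    exact absurd hmem hx
  | succ m ih =>
    rintro x hx ⟨n, hn, hmem⟩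
    have hn0 : n ≠ 0 := by rintro rfl; exact hx hmem
    obtain ⟨n', rfl⟩ : ∃ n', n = n' + 1 := ⟨n - 1, by omega⟩
    have hbmem : f₀^[n'] (f₀ x) ∈ R := by
      rwa [Function.iterate_succ_apply] at hmem
    have hεx : ε ≤ p x (f₀ x) := hεle x hx
    simp only [vfn]
    by_cases hb : f₀ x ∈ R
    · -- next step enters R
      have hsub : Rᶜ ⊆ Finset.univ.erase (f₀ x) := by
        intro k hk
        exact Finset.mem_erase.mpr ⟨fun h => (Finset.mem_compl.mp hk) (h ▸ hb), Finset.mem_univ k⟩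
      calc ∑ k ∈ Rᶜ, p x k * vfn p R m k ≤ ∑ k ∈ Rᶜ, p x k := by
            refine Finset.sum_le_sum fun k _ => ?_
            calc p x k * vfn p R m k ≤ p x k * 1 :=
                  mul_le_mul_of_nonneg_left (vfn_le_one hp1 hs2 m k) (hp1 x k)
              _ = p x k := mul_one _
        _ ≤ ∑ k ∈ Finset.univ.erase (f₀ x), p x k :=
            Finset.sum_le_sum_of_subset_of_nonneg hsub (fun k _ _ => hp1 x k)
        _ = (∑ k, p x k) - p x (f₀ x) := by
            rw [Finset.sum_erase_eq_sub (Finset.mem_univ (f₀ x))]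
        _ = 1 - p x (f₀ x) := by rw [hs2 x]
        _ ≤ 1 - ε := by linarith
        _ ≤ 1 - ε ^ (m + 1) := by
            have : ε ^ (m+1) ≤ ε := pow_le_of_le_one (le_of_lt hε0) hε1 (Nat.succ_ne_zero m)
            linarith
    · -- next step stays out; use IH at f₀ x
      have hIH : vfn p R m (f₀ x) ≤ 1 - ε ^ m := ih (f₀ x) hb ⟨n', by omega, hbmem⟩
      have hbc : f₀ x ∈ Rᶜ := Finset.mem_compl.mpr hb
      rw [← Finset.add_sum_erase Rᶜ _ hbc]
      have h2 : ∑ k ∈ Rᶜ.erase (f₀ x), p x k * vfn p R m k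
          ≤ ∑ k ∈ Rᶜ.erase (f₀ x), p x k := by
        refine Finset.sum_le_sum fun k _ => ?_
        calc p x k * vfn p R m k ≤ p x k * 1 :=
              mul_le_mul_of_nonneg_left (vfn_le_one hp1 hs2 m k) (hp1 x k)
          _ = p x k := mul_one _
      have h3 : ∑ k ∈ Rᶜ.erase (f₀ x), p x k ≤ 1 - p x (f₀ x) := by
        have h4 : p x (f₀ x) + ∑ k ∈ Rᶜ.erase (f₀ x), p x k = ∑ k ∈ Rᶜ, p x k :=
          Finset.add_sum_erase Rᶜ (fun k => p x k) hbc
        have h5 := sum_compl_le hp1 hs2 (R := R) x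
        linarith
      have h6 : p x (f₀ x) * vfn p R m (f₀ x) ≤ p x (f₀ x) * (1 - ε ^ m) :=
        mul_le_mul_of_nonneg_left hIH (hp1 x (f₀ x))
      have h7 : ε ^ (m + 1) ≤ p x (f₀ x) * ε ^ m := by
        rw [pow_succ, mul_comm (ε ^ m) ε]
        exact mul_le_mul_of_nonneg_right hεx (pow_nonneg (le_of_lt hε0) m)
      nlinarith [hp1 x (f₀ x)]

lemma hit_bound {f₀ : S → S} {R : Finset S} (hf₀ : IsForest R f₀) :
    ∀ x, x ∉ R → ∃ n, n < Fintype.card S ∧ f₀^[n] x ∈ R := by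
  intro x hx
  have hex : ∃ n, f₀^[n] x ∈ R := hf₀.2 x
  set N := Nat.find hex with hN
  have hspec : f₀^[N] x ∈ R := Nat.find_spec hex
  have key : ∀ a b : Fin (N+1), (a : ℕ) < (b : ℕ) →
      f₀^[(a : ℕ)] x = f₀^[(b : ℕ)] x → False := by
    intro a b hab hE
    have h1 : f₀^[(N - b) + b] x ∈ R := by
      rwa [show (N : ℕ) - b + b = N by omega]
    rw [Function.iterate_add_apply, ← hE, ← Function.iterate_add_apply] at h1
    exact Nat.find_min hex (show (N : ℕ) - b + a < N by omega) h1
  have hinj : Function.Injective (fun t : Fin (N+1) => f₀^[(t : ℕ)] x) := by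
    intro t₁ t₂ heq
    dsimp at heq
    by_contra hne
    have hne' : (t₁ : ℕ) ≠ (t₂ : ℕ) := fun h => hne (Fin.ext h)
    rcases lt_or_gt_of_ne hne' with h | h
    · exact key t₁ t₂ h heq
    · exact key t₂ t₁ h heq.symm
  have hcard : N + 1 ≤ Fintype.card S := by
    simpa using Fintype.card_le_of_injective _ hinj
  exact ⟨N, by omega, hspec⟩

end Ana
section Ana2
open Function Classical Finset
variable {S : Type*} [Fintype S] [DecidableEq S]
variable {p : S → S → ℝ} {R : Finset S}

lemma vfn_contract (hp1 : ∀ a b, 0 ≤ p a b) {K : ℕ} {c : ℝ} (hc : 0 ≤ c)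
    (hvK : ∀ y, vfn p R K y ≤ c) : ∀ b x, vfn p R (b + K) x ≤ c * vfn p R b x := by
  intro b
  induction b with
  | zero => intro x; simpa [vfn] using hvK x
  | succ b ih =>
    intro x
    have h1 : b + 1 + K = (b + K) + 1 := by omega
    rw [h1]
    simp only [vfn]
    rw [Finset.mul_sum]
    refine Finset.sum_le_sum fun k _ => ?_
    calc p x k * vfn p R (b + K) k ≤ p x k * (c * vfn p R b k) :=
          mul_le_mul_of_nonneg_left (ih k) (hp1 x k)
      _ = c * (p x k * vfn p R b k) := by ring

lemma vfn_geom (hp1 : ∀ a b, 0 ≤ p a b) {K : ℕ} {c : ℝ} (hc : 0 ≤ c)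
    (hvK : ∀ y, vfn p R K y ≤ c) : ∀ q x, vfn p R (K * q) x ≤ c ^ q := by
  intro q
  induction q with
  | zero => intro x; simp [vfn]
  | succ q ih =>
    intro x
    have h1 : K * (q + 1) = K * q + K := by ring
    rw [h1]
    calc vfn p R (K * q + K) x ≤ c * vfn p R (K * q) x := vfn_contract hp1 hc hvK (K * q) x
      _ ≤ c * c ^ q := mul_le_mul_of_nonneg_left (ih x) hc
      _ = c ^ (q + 1) := by rw [pow_succ]; ring

lemma vfn_pow_div (hp1 : ∀ a b, 0 ≤ p a b) (hs2 : ∀ a, ∑ b, p a b = 1)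
    {K : ℕ} (hK : 0 < K) {c : ℝ} (hc : 0 ≤ c) (hvK : ∀ y, vfn p R K y ≤ c) :
    ∀ m x, vfn p R m x ≤ c ^ (m / K) := by
  intro m x
  calc vfn p R m x ≤ vfn p R (K * (m / K)) x := by
        refine vfn_mono hp1 hs2 ?_ x
        rw [mul_comm]
        exact Nat.div_mul_le_self m K
    _ ≤ c ^ (m / K) := vfn_geom hp1 hc hvK (m / K) x

lemma grouped_geom {K : ℕ} (hK : 0 < K) {c : ℝ} :
    ∀ N, ∑ m ∈ Finset.range (K * N), c ^ (m / K) = (K : ℝ) * ∑ q ∈ Finset.range N, c ^ q := by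
  intro N
  induction N with
  | zero => simp
  | succ N ih =>
    have h1 : K * (N + 1) = K * N + K := by ring
    rw [h1, Finset.sum_range_add, ih, Finset.sum_range_succ]
    have h2 : ∀ x ∈ Finset.range K, c ^ ((K * N + x) / K) = c ^ N := by
      intro x hx
      congr 1
      rw [Nat.add_comm, Nat.add_mul_div_left _ _ hK,
        Nat.div_eq_of_lt (Finset.mem_range.mp hx)]
      omega
    rw [Finset.sum_congr rfl h2, Finset.sum_const, Finset.card_range]
    push_cast
    ring

lemma vfn_summable (hp1 : ∀ a b, 0 ≤ p a b) (hs2 : ∀ a, ∑ b, p a b = 1)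
    {K : ℕ} (hK : 0 < K) {c : ℝ} (hc : 0 ≤ c) (hc1 : c < 1)
    (hvK : ∀ y, vfn p R K y ≤ c) (x : S) : Summable (fun m => vfn p R m x) := by
  have hgeo : Summable (fun q : ℕ => c ^ q) := summable_geometric_of_lt_one hc hc1
  have hgeo_sum : ∀ N, ∑ q ∈ Finset.range N, c ^ q ≤ (1 - c)⁻¹ := by
    intro N
    have h1 : ∑ q ∈ Finset.range N, c ^ q ≤ ∑' q, c ^ q :=
      hgeo.sum_le_tsum (Finset.range N) (fun q _ => pow_nonneg hc q)
    rwa [tsum_geometric_of_lt_one hc hc1] at h1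
  refine summable_of_sum_range_le (c := (K : ℝ) * (1 - c)⁻¹)
    (fun m => vfn_nonneg hp1 m x) (fun N => ?_)
  calc ∑ m ∈ Finset.range N, vfn p R m x
      ≤ ∑ m ∈ Finset.range N, c ^ (m / K) :=
        Finset.sum_le_sum fun m _ => vfn_pow_div hp1 hs2 hK hc hvK m x
    _ ≤ ∑ m ∈ Finset.range (K * N), c ^ (m / K) := by
        refine Finset.sum_le_sum_of_subset_of_nonneg ?_ (fun m _ _ => pow_nonneg hc _)
        exact Finset.range_subset_range.mpr (Nat.le_mul_of_pos_left N hK)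
    _ = (K : ℝ) * ∑ q ∈ Finset.range N, c ^ q := grouped_geom hK N
    _ ≤ (K : ℝ) * (1 - c)⁻¹ := by
        refine mul_le_mul_of_nonneg_left (hgeo_sum N) (by positivity)

end Ana2
section Paths
open Function Classical Finset
variable {S : Type*} [Fintype S] [DecidableEq S]
variable {p : S → S → ℝ} {R : Finset S}

lemma wt_nonneg (hp1 : ∀ a b, 0 ≤ p a b) : ∀ (l : List S) (x : S), 0 ≤ wt p x l := by
  intro l
  induction l with
  | nil => intro x; simp [wt]
  | cons a l ih => intro x; exact mul_nonneg (hp1 x a) (ih a)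

open Classical in
lemma finsum_paths (hp1 : ∀ a b, 0 ≤ p a b) : ∀ (n : ℕ) (x : S),
    ∑ t : Fin n → S, (if (∀ y ∈ List.ofFn t, y ∉ R) then wt p x (List.ofFn t) else 0)
      = vfn p R n x := by
  intro n
  induction n with
  | zero =>
    intro x
    simp [List.ofFn_zero, wt, vfn]
  | succ n ih =>
    intro x
    have hbij : Function.Bijective (fun q : S × (Fin n → S) => (Fin.cons q.1 q.2 : Fin (n+1) → S)) := by
      rw [Function.bijective_iff_has_inverse]
      refine ⟨fun t => (t 0, Fin.tail t), ?_, ?_⟩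
      · rintro ⟨k, t'⟩
        simp [Fin.tail_cons]
      · intro t
        simp [Fin.cons_self_tail]
    have hE := Fintype.sum_bijective _ hbij
      (fun q : S × (Fin n → S) =>
        if (q.1 ∉ R ∧ ∀ y ∈ List.ofFn q.2, y ∉ R) then p x q.1 * wt p q.1 (List.ofFn q.2) else 0)
      (fun t : Fin (n+1) → S =>
        if (∀ y ∈ List.ofFn t, y ∉ R) then wt p x (List.ofFn t) else 0)
      ?_
    · rw [← hE, Fintype.sum_prod_type]
      have hk : ∀ k : S, (∑ t' : Fin n → S,
          if (k ∉ R ∧ ∀ y ∈ List.ofFn t', y ∉ R) then p x k * wt p k (List.ofFn t') else 0)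
          = if k ∈ Rᶜ then p x k * vfn p R n k else 0 := by
        intro k
        by_cases hkR : k ∉ R
        · rw [if_pos (Finset.mem_compl.mpr hkR), ← ih k, Finset.mul_sum]
          refine Finset.sum_congr rfl (fun t' _ => ?_)
          rw [mul_ite, mul_zero]
          refine if_congr ?_ rfl rfl
          simp [hkR]
        · rw [if_neg (fun h => hkR (Finset.mem_compl.mp h))]
          refine Finset.sum_eq_zero (fun t' _ => ?_)
          rw [if_neg (fun h => hkR h.1)]
      rw [Finset.sum_congr rfl (fun k _ => hk k), Fintype.sum_ite_mem]
      simp only [vfn]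
    · rintro ⟨k, t'⟩
      have h1 : List.ofFn (Fin.cons k t' : Fin (n+1) → S) = k :: List.ofFn t' := by
        rw [List.ofFn_succ]
        congr 1
      dsimp only
      rw [h1]
      refine if_congr ?_ rfl rfl
      · rw [List.forall_mem_cons]

open Classical in
lemma meanHit_eq_tsum_vfn (hp1 : ∀ a b, 0 ≤ p a b)
    (hsum : ∀ y, Summable (fun m => vfn p R m y)) (x : S) :
    meanHit p R x = ∑' n, vfn p R n x := by
  classical
  set s : Set (List S) := {l | ∀ y ∈ l, y ∉ R} with hs
  have h0 : meanHit p R x = ∑' l : List S, Set.indicator s (wt p x) l := tsum_subtype s (wt p x)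
  set F : (Σ n : ℕ, Fin n → S) → ℝ := fun σ =>
    if (∀ y ∈ List.ofFn σ.2, y ∉ R) then wt p x (List.ofFn σ.2) else 0 with hF
  have h1 : ∀ l : List S, Set.indicator s (wt p x) l = F ((List.equivSigmaTuple (α := S)) l) := by
    intro l
    have h2 : F ((List.equivSigmaTuple (α := S)) l)
        = if (∀ y ∈ List.ofFn (l.get), y ∉ R) then wt p x (List.ofFn (l.get)) else 0 := rfl
    rw [h2]
    simp only [List.ofFn_get]
    by_cases hmem : ∀ y ∈ l, y ∉ R
    · rw [Set.indicator_of_mem (show l ∈ s from hmem) (wt p x), if_pos hmem]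
    · rw [Set.indicator_of_notMem (show l ∉ s from hmem) (wt p x), if_neg hmem]
  have hFnn : ∀ σ, 0 ≤ F σ := by
    intro σ
    rw [hF]
    dsimp only
    split_ifs
    · exact wt_nonneg hp1 _ x
    · exact le_refl 0
  have hfib : ∀ n, Summable (fun t : Fin n → S => F ⟨n, t⟩) :=
    fun n => (hasSum_fintype _).summable
  have hfibsum : ∀ n, ∑' t : Fin n → S, F ⟨n, t⟩ = vfn p R n x := by
    intro n
    rw [tsum_fintype]
    exact finsum_paths hp1 n x
  have hFsummable : Summable F := by
    refine (summable_sigma_of_nonneg hFnn).mpr ⟨hfib, ?_⟩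
    have : (fun n => ∑' t : Fin n → S, F ⟨n, t⟩) = fun n => vfn p R n x := funext hfibsum
    rw [this]
    exact hsum x
  calc meanHit p R x = ∑' l : List S, Set.indicator s (wt p x) l := h0
    _ = ∑' l : List S, F ((List.equivSigmaTuple (α := S)) l) := tsum_congr h1
    _ = ∑' σ : (Σ n : ℕ, Fin n → S), F σ := ((List.equivSigmaTuple (α := S))).tsum_eq F
    _ = ∑' n, ∑' t : Fin n → S, F ⟨n, t⟩ := hFsummable.tsum_sigma' hfib
    _ = ∑' n, vfn p R n x := tsum_congr hfibsum

end Paths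
section Main
open Function Classical Finset
variable {S : Type*} [Fintype S] [DecidableEq S]
variable {p : S → S → ℝ} {R : Finset S}

lemma H_recursion (hsum : ∀ y, Summable (fun m => vfn p R m y)) (x : S) :
    (∑' n, vfn p R n x) = 1 + ∑ k ∈ Rᶜ, p x k * (∑' n, vfn p R n k) := by
  rw [(hsum x).tsum_eq_zero_add]
  have h0 : vfn p R 0 x = 1 := rfl
  rw [h0]
  congr 1
  have h1 : ∀ n : ℕ, vfn p R (n + 1) x = ∑ k ∈ Rᶜ, p x k * vfn p R n k := fun n => rfl
  calc (∑' n, vfn p R (n + 1) x) = ∑' n, ∑ k ∈ Rᶜ, p x k * vfn p R n k := tsum_congr h1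
    _ = ∑ k ∈ Rᶜ, ∑' n, p x k * vfn p R n k :=
        Summable.tsum_finsetSum (fun k _ => Summable.mul_left (p x k) (hsum k))
    _ = ∑ k ∈ Rᶜ, p x k * ∑' n, vfn p R n k :=
        Finset.sum_congr rfl (fun k _ => tsum_mul_left)

theorem mean_hitting_time_tree_formula' (p : S → S → ℝ) (hs : IsStochastic p) (R : Finset S)
    (hw : 0 < w p R) (i : S) (hi : i ∉ R) :
    meanHit p R i = (∑ j ∈ Rᶜ, wroot p (insert j R) i j) / w p R := by
  classical
  obtain ⟨hp1, hs2⟩ := hs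
  -- extract a positive-weight forest
  have hex : ∃ f₀, IsForest R f₀ ∧ 0 < forestWt p R f₀ := by
    by_contra h
    push_neg at h
    have hle : w p R ≤ 0 := by
      refine Finset.sum_nonpos (fun f _ => ?_)
      split_ifs with hf
      · exact h f hf
      · exact le_refl 0
    linarith
  obtain ⟨f₀, hf₀, hwt₀⟩ := hex
  have hpos : ∀ m ∈ Rᶜ, 0 < p m (f₀ m) := by
    intro m hm
    rcases lt_or_ge 0 (p m (f₀ m)) with h | h
    · exact h
    · exfalso
      have hz : p m (f₀ m) = 0 := le_antisymm h (hp1 m (f₀ m))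
      have : forestWt p R f₀ = 0 := by
        unfold forestWt
        exact Finset.prod_eq_zero hm hz
      linarith
  have hiRc : i ∈ Rᶜ := Finset.mem_compl.mpr hi
  obtain ⟨m₀, hm₀, hmin⟩ := Finset.exists_min_image Rᶜ (fun m => p m (f₀ m)) ⟨i, hiRc⟩
  set ε := p m₀ (f₀ m₀) with hεdef
  have hε0 : 0 < ε := hpos m₀ hm₀
  have hε1 : ε ≤ 1 := by
    have h1 : p m₀ (f₀ m₀) ≤ ∑ b, p m₀ b :=
      Finset.single_le_sum (fun b _ => hp1 m₀ b) (Finset.mem_univ (f₀ m₀))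
    rwa [hs2 m₀] at h1
  have hεle : ∀ x, x ∉ R → ε ≤ p x (f₀ x) := fun x hx => hmin x (Finset.mem_compl.mpr hx)
  set K := Fintype.card S with hKdef
  have hK0 : 0 < K := Fintype.card_pos_iff.mpr ⟨i⟩
  set c : ℝ := 1 - ε ^ K with hcdef
  have hεK1 : ε ^ K ≤ 1 := pow_le_one₀ hε0.le hε1
  have hc0 : 0 ≤ c := by rw [hcdef]; linarith
  have hc1 : c < 1 := by
    have : 0 < ε ^ K := pow_pos hε0 K
    rw [hcdef]; linarith
  have hvK : ∀ y, vfn p R K y ≤ c := by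
    intro y
    by_cases hy : y ∈ R
    · obtain ⟨K', hK'⟩ : ∃ K', K = K' + 1 := ⟨K - 1, by omega⟩
      have hB : ∀ k ∈ Rᶜ, vfn p R K' k ≤ 1 - ε ^ K' := by
        intro k hk
        have hkR := Finset.mem_compl.mp hk
        obtain ⟨n, hn, hmem⟩ := hit_bound hf₀ k hkR
        refine vfn_decay hp1 hs2 hε0 hε1 hεle K' k hkR ⟨n, by omega, hmem⟩
      have hεK' : 0 ≤ 1 - ε ^ K' := by
        have := pow_le_one₀ hε0.le hε1 (n := K')
        linarith
      have hstep : ε ^ (K' + 1) ≤ ε ^ K' := by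
        rw [pow_succ]
        calc ε ^ K' * ε ≤ ε ^ K' * 1 :=
              mul_le_mul_of_nonneg_left hε1 (pow_nonneg hε0.le K')
          _ = ε ^ K' := mul_one _
      have : vfn p R (K' + 1) y ≤ 1 - ε ^ (K' + 1) := by
        calc vfn p R (K' + 1) y = ∑ k ∈ Rᶜ, p y k * vfn p R K' k := rfl
          _ ≤ ∑ k ∈ Rᶜ, p y k * (1 - ε ^ K') :=
              Finset.sum_le_sum fun k hk => mul_le_mul_of_nonneg_left (hB k hk) (hp1 y k)
          _ = (1 - ε ^ K') * ∑ k ∈ Rᶜ, p y k := by rw [← Finset.sum_mul]; ring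
          _ ≤ (1 - ε ^ K') * 1 :=
              mul_le_mul_of_nonneg_left (sum_compl_le hp1 hs2 y) hεK'
          _ = 1 - ε ^ K' := mul_one _
          _ ≤ 1 - ε ^ (K' + 1) := by linarith
      rw [hcdef, hK']
      exact this
    · obtain ⟨n, hn, hmem⟩ := hit_bound hf₀ y hy
      rw [hcdef]
      exact vfn_decay hp1 hs2 hε0 hε1 hεle K y hy ⟨n, by omega, hmem⟩
  have hsum : ∀ y, Summable (fun m => vfn p R m y) :=
    fun y => vfn_summable hp1 hs2 hK0 hc0 hc1 hvK y
  -- the two solutions of the linear system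
  have hW : w p R ≠ 0 := ne_of_gt hw
  have hdrec : ∀ y, y ∉ R →
      (∑' n, vfn p R n y) - (∑ j ∈ Rᶜ, wroot p (insert j R) y j) / w p R
      = ∑ k ∈ Rᶜ, p y k * ((∑' n, vfn p R n k)
          - (∑ j ∈ Rᶜ, wroot p (insert j R) k j) / w p R) := by
    intro y hy
    rw [H_recursion hsum y, g_recursion p hs2 hy]
    rw [add_div, div_self hW, Finset.sum_div]
    rw [Finset.sum_congr rfl (fun k (_ : k ∈ Rᶜ) =>
      (mul_sub (p y k) (∑' n, vfn p R n k) ((∑ j ∈ Rᶜ, wroot p (insert j R) k j) / w p R)))]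
    rw [Finset.sum_sub_distrib]
    have h2 : ∀ k ∈ Rᶜ, p y k * ((∑ j ∈ Rᶜ, wroot p (insert j R) k j) / w p R)
        = p y k * (∑ j ∈ Rᶜ, wroot p (insert j R) k j) / w p R := fun k _ =>
      (mul_div_assoc _ _ _).symm
    rw [Finset.sum_congr rfl h2]
    ring
  set d : S → ℝ := fun y => (∑' n, vfn p R n y)
    - (∑ j ∈ Rᶜ, wroot p (insert j R) y j) / w p R with hd
  set C : ℝ := ∑ k ∈ Rᶜ, |d k| with hC
  have hC0 : 0 ≤ C := Finset.sum_nonneg (fun k _ => abs_nonneg _)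
  have hbound : ∀ n, ∀ y, y ∉ R → |d y| ≤ C * vfn p R n y := by
    intro n
    induction n with
    | zero =>
      intro y hy
      have h1 : |d y| ≤ C :=
        Finset.single_le_sum (f := fun k => |d k|) (fun k _ => abs_nonneg _)
          (Finset.mem_compl.mpr hy)
      have h2 : vfn p R 0 y = 1 := rfl
      rw [h2, mul_one]
      exact h1
    | succ n ih =>
      intro y hy
      have h1 : d y = ∑ k ∈ Rᶜ, p y k * d k := hdrec y hy
      calc |d y| = |∑ k ∈ Rᶜ, p y k * d k| := by rw [h1]
        _ ≤ ∑ k ∈ Rᶜ, |p y k * d k| := Finset.abs_sum_le_sum_abs _ _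
        _ = ∑ k ∈ Rᶜ, p y k * |d k| := by
            refine Finset.sum_congr rfl (fun k _ => ?_)
            rw [abs_mul, abs_of_nonneg (hp1 y k)]
        _ ≤ ∑ k ∈ Rᶜ, p y k * (C * vfn p R n k) := by
            refine Finset.sum_le_sum fun k hk => ?_
            exact mul_le_mul_of_nonneg_left (ih k (Finset.mem_compl.mp hk)) (hp1 y k)
        _ = C * vfn p R (n + 1) y := by
            have h3 : vfn p R (n + 1) y = ∑ k ∈ Rᶜ, p y k * vfn p R n k := rfl
            rw [h3, Finset.mul_sum]
            exact Finset.sum_congr rfl (fun k _ => by ring)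
  have hdi : d i = 0 := by
    have htend : Filter.Tendsto (fun n => C * vfn p R n i) Filter.atTop (nhds 0) := by
      have h1 := (hsum i).tendsto_atTop_zero
      have h2 := h1.const_mul C
      simpa using h2
    have habs : |d i| ≤ 0 := ge_of_tendsto' htend (fun n => hbound n i hi)
    have : |d i| = 0 := le_antisymm habs (abs_nonneg _)
    exact abs_eq_zero.mp this
  have hmain : (∑' n, vfn p R n i) = (∑ j ∈ Rᶜ, wroot p (insert j R) i j) / w p R := by
    have h1 : d i = (∑' n, vfn p R n i)
        - (∑ j ∈ Rᶜ, wroot p (insert j R) i j) / w p R := rfl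
    rw [h1] at hdi
    linarith
  rw [meanHit_eq_tsum_vfn hp1 hsum i, hmain]

end Main

/-- Mean hitting time tree formula: `E_i[T_R] = (∑_{j∉R} w_{ij}(R ∪ {j})) / w(R)`. -/
theorem mean_hitting_time_tree_formula {S : Type*} [Fintype S] [DecidableEq S]
    (p : S → S → ℝ) (hs : IsStochastic p) (R : Finset S) (hw : 0 < w p R)
    (i : S) (hi : i ∉ R) :
    meanHit p R i = (∑ j ∈ Rᶜ, wroot p (insert j R) i j) / w p R := by
  exact mean_hitting_time_tree_formula' p hs R hw i hi
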